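/- Let W be a finite-dimensional K-vector space with a Hermitian form Φ (Φ is additive and K-linear in the first variable and Φ(w,v) = τ(Φ(v,w)) for all v,w). Let Rad(W) = {v ∈ W : Φ(v,w) = 0 for all w ∈ W}, and let W' be a K-subspace of W with W = Rad(W) ⊕ W' (internal direct sum). Assume dim W' ≥ 2. Define the graph G(W,Φ) with vertices the 1-dimensional subspaces S of W containing a vector v with Φ(v,v) ≠ 0, two vertices S, T adjacent iff S ≠ T and Φ(s,t) = 0 for all s ∈ S, t ∈ T; define G(W',Φ) analogously using the restriction of Φ to W'. Then G(W,Φ) is connected if and only if G(W',Φ) is connected. -/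

import Mathlib

namespace FramePaper

variable {K : Type*} [Field K]

/-- The orthogonality graph of a Hermitian form `Φ` on a `K`-module `M`: vertices are the
`1`-dimensional subspaces containing a vector `v` with `Φ(v,v) ≠ 0`, with `S, T` adjacent
iff `S ≠ T` and `Φ(s,t) = 0` for all `s ∈ S`, `t ∈ T`. -/
def HermGraph (τ : K →+* K) {M : Type*} [AddCommGroup M] [Module K M]
    (Φ : M → M → K) (hherm : ∀ v w, Φ w v = τ (Φ v w)) :
    SimpleGraph {S : Submodule K M // Module.finrank K S = 1 ∧ ∃ v ∈ S, Φ v v ≠ 0} where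
  Adj S T := S ≠ T ∧ ∀ s ∈ S.1, ∀ t ∈ T.1, Φ s t = 0
  symm := ⟨by
    rintro S T ⟨hne, h⟩
    exact ⟨hne.symm, fun t ht s hs => by rw [hherm, h s hs t ht, map_zero]⟩⟩
  loopless := ⟨fun S h => h.1 rfl⟩

section Aux

variable (τ : K →+* K) {M : Type*} [AddCommGroup M] [Module K M]
variable (Φ : M → M → K)

/-- A 1-dimensional subspace with an anisotropic vector is spanned by an anisotropic vector. -/
lemma vertex_gen (hsmul : ∀ (c : K) (a w : M), Φ (c • a) w = c * Φ a w)
    (hherm : ∀ v w, Φ w v = τ (Φ v w))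
    (S : Submodule K M) (h1 : Module.finrank K S = 1) (hex : ∃ v ∈ S, Φ v v ≠ 0) :
    ∃ v : M, Φ v v ≠ 0 ∧ S = Submodule.span K {v} := by
  obtain ⟨v, hv0, hgen⟩ := finrank_eq_one_iff'.mp h1
  have hSspan : S = Submodule.span K {(v : M)} := by
    apply le_antisymm
    · intro w hw
      obtain ⟨c, hc⟩ := hgen ⟨w, hw⟩
      exact Submodule.mem_span_singleton.mpr ⟨c, congrArg (Subtype.val) hc⟩
    · rw [Submodule.span_le, Set.singleton_subset_iff]
      exact v.2
  refine ⟨v, ?_, hSspan⟩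
  intro hvv
  obtain ⟨w, hwS, hw⟩ := hex
  obtain ⟨c, hc⟩ := Submodule.mem_span_singleton.mp (hSspan ▸ hwS)
  apply hw
  rw [← hc, hsmul, hherm, hsmul, hvv, mul_zero, map_zero, mul_zero]

/-- The span of an anisotropic vector is a vertex. -/
lemma span_vertex (hsmul : ∀ (c : K) (a w : M), Φ (c • a) w = c * Φ a w)
    (v : M) (hv : Φ v v ≠ 0) :
    Module.finrank K (Submodule.span K {v} : Submodule K M) = 1 ∧
      ∃ w ∈ Submodule.span K {v}, Φ w w ≠ 0 := by
  have hv0 : v ≠ 0 := by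
    rintro rfl
    apply hv
    have := hsmul 0 0 0
    rwa [zero_smul, zero_mul] at this
  exact ⟨finrank_span_singleton hv0, v, Submodule.mem_span_singleton_self v, hv⟩

/-- Adjacency in the Hermitian graph is equivalent to total orthogonality. -/
lemma herm_adj_iff (hherm : ∀ v w, Φ w v = τ (Φ v w))
    (S T : {S : Submodule K M // Module.finrank K S = 1 ∧ ∃ v ∈ S, Φ v v ≠ 0}) :
    (HermGraph τ Φ hherm).Adj S T ↔ ∀ s ∈ S.1, ∀ t ∈ T.1, Φ s t = 0 := by
  constructor
  · exact fun h => h.2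
  · intro h
    refine ⟨?_, h⟩
    rintro rfl
    obtain ⟨v, hvS, hv⟩ := S.2.2
    exact hv (h v hvS v hvS)

/-- In a connected Hermitian graph on a space of dimension `≥ 2`, every vertex
has a neighbor. -/
lemma exists_neighbor [FiniteDimensional K M] (hdim : 2 ≤ Module.finrank K M)
    (hadd : ∀ a b w, Φ (a + b) w = Φ a w + Φ b w)
    (hsmul : ∀ (c : K) (a w : M), Φ (c • a) w = c * Φ a w)
    (hherm : ∀ v w, Φ w v = τ (Φ v w))
    (hconn : (HermGraph τ Φ hherm).Connected)
    (S : {S : Submodule K M // Module.finrank K S = 1 ∧ ∃ v ∈ S, Φ v v ≠ 0}) :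
    ∃ T, (HermGraph τ Φ hherm).Adj S T := by
  obtain ⟨v, hv, hSspan⟩ := vertex_gen τ Φ hsmul hherm S.1 S.2.1 S.2.2
  -- the linear functional `w ↦ Φ w v` has nontrivial kernel
  set L : M →ₗ[K] K :=
    { toFun := fun w => Φ w v
      map_add' := fun a b => hadd a b v
      map_smul' := fun c a => hsmul c a v } with hL
  have hker : ∃ u : M, u ≠ 0 ∧ Φ u v = 0 := by
    have h1 := LinearMap.finrank_range_add_finrank_ker L
    have h2 : Module.finrank K (LinearMap.range L) ≤ 1 := by
      have := Submodule.finrank_le (LinearMap.range L)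
      simpa [Module.finrank_self] using this
    have h3 : 1 ≤ Module.finrank K (LinearMap.ker L) := by omega
    have hne : LinearMap.ker L ≠ ⊥ := by
      intro h
      rw [h, finrank_bot] at h3
      omega
    obtain ⟨u, huk, hu0⟩ := Submodule.exists_mem_ne_zero_of_ne_bot hne
    exact ⟨u, hu0, huk⟩
  obtain ⟨u, hu0, huv⟩ := hker
  have hvu : Φ v u = 0 := by rw [hherm u v, huv, map_zero]
  -- pick an anisotropic vector not in `span {v}`
  have hexw : ∃ w : M, Φ w w ≠ 0 ∧ w ∉ Submodule.span K ({v} : Set M) := by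
    have hunospan : u ∉ Submodule.span K ({v} : Set M) := by
      intro hmem
      obtain ⟨c, hc⟩ := Submodule.mem_span_singleton.mp hmem
      apply hu0
      rw [← hc]
      have hc0 : c = 0 := by
        have := huv
        rw [← hc, hsmul] at this
        rcases mul_eq_zero.mp this with h | h
        · exact h
        · exact absurd h hv
      rw [hc0, zero_smul]
    by_cases huu : Φ u u = 0
    · refine ⟨v + u, ?_, ?_⟩
      · have e2 : ∀ a b w : M, Φ w (a + b) = Φ w a + Φ w b := by
          intro a b w
          rw [hherm (a + b) w, hadd, map_add, ← hherm, ← hherm]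
        rw [hadd, e2, e2, hvu, huv, huu, add_zero, add_zero, add_zero]
        exact hv
      · intro hmem
        have hvm : v ∈ Submodule.span K ({v} : Set M) := Submodule.mem_span_singleton_self v
        have : v + u - v ∈ Submodule.span K ({v} : Set M) := Submodule.sub_mem _ hmem hvm
        rw [add_sub_cancel_left] at this
        exact hunospan this
    · exact ⟨u, huu, hunospan⟩
  obtain ⟨w, hw, hwns⟩ := hexw
  set T : {S : Submodule K M // Module.finrank K S = 1 ∧ ∃ v ∈ S, Φ v v ≠ 0} :=
    ⟨Submodule.span K {w}, span_vertex Φ hsmul w hw⟩ with hT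
  have hne : S ≠ T := by
    intro h
    apply hwns
    rw [← hSspan, h]
    exact Submodule.mem_span_singleton_self w
  obtain ⟨p⟩ := hconn.preconnected S T
  exact ⟨p.getVert 1, SimpleGraph.Walk.adj_snd (SimpleGraph.Walk.not_nil_of_ne hne)⟩

end Aux

/-- Let `W` be a finite-dimensional `K`-vector space with a Hermitian
form `Φ`, let `R = Rad(W)` be its radical and `W'` a complement of `R` in `W` with
`dim W' ≥ 2`. Then `G(W,Φ)` is connected iff `G(W',Φ|_{W'})` is connected. -/
theorem statement14 (τ : K →+* K) (hτne : (⇑τ : K → K) ≠ id) (hτ2 : ∀ x, τ (τ x) = x)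
    {W : Type*} [AddCommGroup W] [Module K W] [FiniteDimensional K W]
    (Φ : W → W → K)
    (hadd : ∀ a b w, Φ (a + b) w = Φ a w + Φ b w)
    (hsmul : ∀ (c : K) (a w : W), Φ (c • a) w = c * Φ a w)
    (hherm : ∀ v w, Φ w v = τ (Φ v w))
    (R : Submodule K W) (hR : ∀ v, v ∈ R ↔ ∀ w, Φ v w = 0)
    (W' : Submodule K W) (hcompl : IsCompl R W')
    (hdim : 2 ≤ Module.finrank K W') :
    (HermGraph τ Φ hherm).Connected ↔
      (HermGraph τ (fun a b : W' => Φ a.1 b.1)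
        (fun v w => hherm v.1 w.1)).Connected := by
  classical
  set Φ' : W' → W' → K := fun a b : W' => Φ a.1 b.1 with hΦ'
  have hherm' : ∀ v w : W', Φ' w v = τ (Φ' v w) := fun v w => hherm v.1 w.1
  have hadd' : ∀ a b w : W', Φ' (a + b) w = Φ' a w + Φ' b w := by
    intro a b w; exact hadd a.1 b.1 w.1
  have hsmul' : ∀ (c : K) (a w : W'), Φ' (c • a) w = c * Φ' a w := by
    intro c a w; exact hsmul c a.1 w.1
  set π : W →ₗ[K] W' := W'.linearProjOfIsCompl R hcompl.symm with hπdef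
  -- the form only depends on projections to `W'`
  have hπl : ∀ v w : W, Φ v w = Φ (π v).1 w := by
    intro v w
    have hdec : (R.linearProjOfIsCompl W' hcompl v : W) + (W'.linearProjOfIsCompl R hcompl.symm v : W) = v :=
      Submodule.projection_add_projection_eq_self hcompl v
    have hrad : Φ ((R.linearProjOfIsCompl W' hcompl v : W)) w = 0 :=
      (hR _).mp (R.linearProjOfIsCompl W' hcompl v).2 w
    calc Φ v w = Φ ((R.linearProjOfIsCompl W' hcompl v : W)
          + (W'.linearProjOfIsCompl R hcompl.symm v : W)) w := by rw [hdec]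
      _ = _ := by rw [hadd, hrad, zero_add]
  have hπ : ∀ v w : W, Φ v w = Φ (π v).1 (π w).1 := by
    intro v w
    rw [hπl v w, hherm, hπl w (π v).1, hherm, hτ2]
  -- vertex transport maps
  set VW := {S : Submodule K W // Module.finrank K S = 1 ∧ ∃ v ∈ S, Φ v v ≠ 0} with hVW
  set VW' := {S : Submodule K W' // Module.finrank K S = 1 ∧ ∃ v ∈ S, Φ' v v ≠ 0} with hVW'
  have iVprop : ∀ S' : VW', Module.finrank K (S'.1.map W'.subtype) = 1 ∧
      ∃ v ∈ S'.1.map W'.subtype, Φ v v ≠ 0 := by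
    intro S'
    constructor
    · rw [← (Submodule.equivMapOfInjective W'.subtype W'.injective_subtype S'.1).finrank_eq]
      exact S'.2.1
    · obtain ⟨x, hx, hxa⟩ := S'.2.2
      exact ⟨x.1, Submodule.mem_map_of_mem hx, hxa⟩
  set iV : VW' → VW := fun S' => ⟨S'.1.map W'.subtype, iVprop S'⟩ with hiV
  have pVprop : ∀ S : VW, Module.finrank K (S.1.map π) = 1 ∧
      ∃ v ∈ S.1.map π, Φ' v v ≠ 0 := by
    intro S
    obtain ⟨v, hv, hSspan⟩ := vertex_gen τ Φ hsmul hherm S.1 S.2.1 S.2.2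
    have hmap : S.1.map π = Submodule.span K {π v} := by
      rw [hSspan, Submodule.map_span, Set.image_singleton]
    have hπv : Φ' (π v) (π v) ≠ 0 := by
      simpa only [hΦ', ← hπ] using hv
    rw [hmap]
    exact span_vertex Φ' hsmul' (π v) hπv
  set pV : VW → VW' := fun S => ⟨S.1.map π, pVprop S⟩ with hpV
  have hPI : ∀ S' : VW', pV (iV S') = S' := by
    intro S'
    apply Subtype.ext
    show (S'.1.map W'.subtype).map π = S'.1
    rw [← Submodule.map_comp, show π ∘ₗ W'.subtype = LinearMap.id from
        Submodule.projectionOnto_comp_subtype hcompl.symm,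
      Submodule.map_id]
  -- adjacency correspondences
  have hAdjP : ∀ S T : VW, (HermGraph τ Φ hherm).Adj S T ↔
      (HermGraph τ Φ' hherm').Adj (pV S) (pV T) := by
    intro S T
    rw [herm_adj_iff, herm_adj_iff]
    constructor
    · rintro h s' ⟨s, hs, rfl⟩ t' ⟨t, ht, rfl⟩
      show Φ (π s).1 (π t).1 = 0
      rw [← hπ]
      exact h s hs t ht
    · intro h s hs t ht
      rw [hπ]
      exact h (π s) (Submodule.mem_map_of_mem hs) (π t) (Submodule.mem_map_of_mem ht)
  have hAdjI : ∀ S' T' : VW', (HermGraph τ Φ' hherm').Adj S' T' ↔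
      (HermGraph τ Φ hherm).Adj (iV S') (iV T') := by
    intro S' T'
    rw [herm_adj_iff, herm_adj_iff]
    constructor
    · rintro h s ⟨x, hx, rfl⟩ t ⟨y, hy, rfl⟩
      exact h x hx y hy
    · intro h x hx y hy
      exact h x.1 (Submodule.mem_map_of_mem hx) y.1 (Submodule.mem_map_of_mem hy)
  -- graph homomorphisms
  set f : HermGraph τ Φ hherm →g HermGraph τ Φ' hherm' :=
    ⟨pV, fun h => (hAdjP _ _).mp h⟩ with hf
  set g : HermGraph τ Φ' hherm' →g HermGraph τ Φ hherm :=
    ⟨iV, fun h => (hAdjI _ _).mp h⟩ with hg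
  constructor
  · intro h
    rw [SimpleGraph.connected_iff]
    refine ⟨?_, h.nonempty.map pV⟩
    intro S' T'
    show (HermGraph τ Φ' hherm').Reachable S' T'
    have hre := (h.preconnected (iV S') (iV T')).map f
    rw [show f (iV S') = S' from hPI S', show f (iV T') = T' from hPI T'] at hre
    exact hre
  · intro h
    rw [SimpleGraph.connected_iff]
    refine ⟨?_, h.nonempty.map iV⟩
    intro S T
    have hmid : (HermGraph τ Φ hherm).Reachable (iV (pV S)) (iV (pV T)) :=
      (h.preconnected (pV S) (pV T)).map g
    have hstep : ∀ S₀ : VW, (HermGraph τ Φ hherm).Reachable S₀ (iV (pV S₀)) := by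
      intro S₀
      obtain ⟨N', hN'⟩ := exists_neighbor τ Φ' hdim hadd' hsmul' hherm' h (pV S₀)
      have h1 : (HermGraph τ Φ hherm).Adj S₀ (iV N') := by
        rw [hAdjP]
        rw [hPI]
        exact hN'
      have h2 : (HermGraph τ Φ hherm).Adj (iV N') (iV (pV S₀)) := by
        rw [← hAdjI]
        exact hN'.symm
      exact h1.reachable.trans h2.reachable
    exact ((hstep S).trans hmid).trans (hstep T).symm

end FramePaper
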